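/- Second moment of the linear-Boltzmann invariant solution: let N ≥ 1, R ≥ 0, and let Ē : (−∞, 0] → ℝ^N be measurable with |Ē(r)| ≤ R for all r. With M̄(v) = ∫_{−∞}^0 e^{σ} M( v − ∫_σ^0 Ē(r) dr ) dσ, one has ∫_{ℝ^N} v ⊗ v M̄(v) dv = Id_N + ∫_{−∞}^0 e^{σ} ( ∫_σ^0 Ē(r) dr ) ⊗ ( ∫_σ^0 Ē(r) dr ) dσ, where Id_N is the N×N identity matrix. -/

import Mathlib

open MeasureTheory Real

/-- The standard Gaussian (Maxwellian) density on `ℝ^N`. -/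
noncomputable def gaussM (N : ℕ) (v : EuclideanSpace ℝ (Fin N)) : ℝ :=
  (2 * Real.pi) ^ (-(N : ℝ) / 2) * Real.exp (-‖v‖ ^ 2 / 2)

namespace LBaux

/-- normalized 1-D Gaussian -/
noncomputable def g1 (x : ℝ) : ℝ := (Real.sqrt (2 * Real.pi))⁻¹ * Real.exp (-x ^ 2 / 2)

lemma sqrt_two_pi_pos : 0 < Real.sqrt (2 * Real.pi) :=
  Real.sqrt_pos.2 (by positivity)

lemma phi_eq (x : ℝ) : Real.exp (-x ^ 2 / 2) = Real.exp (-(1/2 : ℝ) * x ^ 2) := by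
  norm_num [neg_div]; ring_nf

lemma integrable_phi : Integrable (fun x : ℝ => Real.exp (-x ^ 2 / 2)) := by
  simp_rw [phi_eq]
  exact integrable_exp_neg_mul_sq (by norm_num)

lemma integral_phi : ∫ x : ℝ, Real.exp (-x ^ 2 / 2) = Real.sqrt (2 * Real.pi) := by
  simp_rw [phi_eq]
  rw [integral_gaussian]
  rw [show Real.pi / (1/2 : ℝ) = 2 * Real.pi by ring]

lemma integrable_x_phi : Integrable (fun x : ℝ => x * Real.exp (-x ^ 2 / 2)) := by
  simp_rw [phi_eq]
  exact integrable_mul_exp_neg_mul_sq (by norm_num)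

lemma hasDerivAt_phi (x : ℝ) :
    HasDerivAt (fun y : ℝ => Real.exp (-y ^ 2 / 2)) (-x * Real.exp (-x ^ 2 / 2)) x := by
  have h1 : HasDerivAt (fun y : ℝ => -y ^ 2 / 2) (-x) x := by
    have := ((hasDerivAt_pow 2 x).neg).div_const 2
    simpa using this.congr_deriv (by push_cast; ring)
  simpa [mul_comm] using h1.exp

lemma integral_x_phi : ∫ x : ℝ, x * Real.exp (-x ^ 2 / 2) = 0 := by
  have h : ∀ x : ℝ, HasDerivAt (fun y : ℝ => -Real.exp (-y ^ 2 / 2))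
      (x * Real.exp (-x ^ 2 / 2)) x := by
    intro x
    have := (hasDerivAt_phi x).neg
    exact this.congr_deriv (by ring)
  exact integral_eq_zero_of_hasDerivAt_of_integrable h integrable_x_phi integrable_phi.neg

lemma integrable_x2_phi : Integrable (fun x : ℝ => x ^ 2 * Real.exp (-x ^ 2 / 2)) := by
  refine Integrable.mono' ((integrable_exp_neg_mul_sq (b := 1/4) (by norm_num)).const_mul 4)
    ((by fun_prop : Continuous fun x : ℝ => x ^ 2 * Real.exp (-x ^ 2 / 2)).aestronglyMeasurable) (Filter.Eventually.of_forall fun x => ?_)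
  have h1 : x ^ 2 / 4 ≤ Real.exp (x ^ 2 / 4) :=
    le_trans (by linarith [Real.add_one_le_exp (x ^ 2 / 4)]) le_rfl
  have h2 : x ^ 2 ≤ 4 * Real.exp (x ^ 2 / 4) := by nlinarith [Real.exp_pos (x ^ 2 / 4)]
  have h3 : Real.exp (-x ^ 2 / 2) = Real.exp (x ^ 2 / 4) * Real.exp (-(1/4 : ℝ) * x ^ 2 + -x^2/2 - x^2/4 + (1/4)*x^2) := by
    rw [← Real.exp_add]; ring_nf
  rw [Real.norm_eq_abs, abs_of_nonneg (by positivity)]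
  calc x ^ 2 * Real.exp (-x ^ 2 / 2) ≤ (4 * Real.exp (x ^ 2 / 4)) * Real.exp (-x ^ 2 / 2) := by
        gcongr
    _ = 4 * Real.exp (-(1/4 : ℝ) * x ^ 2) := by rw [mul_assoc, ← Real.exp_add]; ring_nf

lemma integral_x2_phi : ∫ x : ℝ, x ^ 2 * Real.exp (-x ^ 2 / 2) = Real.sqrt (2 * Real.pi) := by
  have h : ∀ x : ℝ, HasDerivAt (fun y : ℝ => y * Real.exp (-y ^ 2 / 2))
      (Real.exp (-x ^ 2 / 2) - x ^ 2 * Real.exp (-x ^ 2 / 2)) x := by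
    intro x
    have := (hasDerivAt_id x).mul (hasDerivAt_phi x)
    simp only [id_eq, one_mul] at this
    exact this.congr_deriv (by ring)
  have h0 := integral_eq_zero_of_hasDerivAt_of_integrable h
    (integrable_phi.sub integrable_x2_phi) integrable_x_phi
  rw [integral_sub integrable_phi integrable_x2_phi, integral_phi] at h0
  linarith

end LBaux
namespace LBaux

lemma integrable_g1 : Integrable g1 := integrable_phi.const_mul _

lemma integral_g1 : ∫ x : ℝ, g1 x = 1 := by
  unfold g1
  rw [integral_const_mul, integral_phi, inv_mul_cancel₀ (ne_of_gt sqrt_two_pi_pos)]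

lemma integrable_x_g1 : Integrable (fun x : ℝ => x * g1 x) := by
  have h := integrable_x_phi.const_mul (Real.sqrt (2 * Real.pi))⁻¹
  convert h using 1
  funext x; simp [g1]; ring

lemma integral_x_g1 : ∫ x : ℝ, x * g1 x = 0 := by
  have : (fun x : ℝ => x * g1 x)
      = fun x => (Real.sqrt (2 * Real.pi))⁻¹ * (x * Real.exp (-x ^ 2 / 2)) := by
    funext x; simp [g1]; ring
  rw [this, integral_const_mul, integral_x_phi, mul_zero]

lemma integrable_x2_g1 : Integrable (fun x : ℝ => x ^ 2 * g1 x) := by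
  have h := integrable_x2_phi.const_mul (Real.sqrt (2 * Real.pi))⁻¹
  convert h using 1
  funext x; simp [g1]; ring

lemma integral_x2_g1 : ∫ x : ℝ, x ^ 2 * g1 x = 1 := by
  have : (fun x : ℝ => x ^ 2 * g1 x)
      = fun x => (Real.sqrt (2 * Real.pi))⁻¹ * (x ^ 2 * Real.exp (-x ^ 2 / 2)) := by
    funext x; simp [g1]; ring
  rw [this, integral_const_mul, integral_x2_phi, inv_mul_cancel₀ (ne_of_gt sqrt_two_pi_pos)]

lemma J0 (a : ℝ) : Integrable (fun x : ℝ => g1 (x - a)) := integrable_g1.comp_sub_right a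

lemma J1aux (a : ℝ) : Integrable (fun y : ℝ => (y + a) * g1 y) := by
  have h := integrable_x_g1.add (integrable_g1.const_mul a)
  refine h.congr (Filter.Eventually.of_forall fun y => ?_)
  simp only [Pi.add_apply]; ring

lemma J1 (a : ℝ) : Integrable (fun x : ℝ => x * g1 (x - a)) := by
  have h := (J1aux a).comp_sub_right a
  simpa [sub_add_cancel] using h

lemma J2aux (a : ℝ) : Integrable (fun y : ℝ => (y + a) * (y + a) * g1 y) := by
  have h := (integrable_x2_g1.add ((integrable_x_g1.const_mul (2 * a)))).add
    (integrable_g1.const_mul (a * a))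
  refine h.congr (Filter.Eventually.of_forall fun y => ?_)
  simp only [Pi.add_apply]; ring

lemma J2 (a : ℝ) : Integrable (fun x : ℝ => x * x * g1 (x - a)) := by
  have h := (J2aux a).comp_sub_right a
  simpa [sub_add_cancel] using h

lemma S0 (a : ℝ) : ∫ x : ℝ, g1 (x - a) = 1 := by
  rw [integral_sub_right_eq_self]; exact integral_g1

lemma S1 (a : ℝ) : ∫ x : ℝ, x * g1 (x - a) = a := by
  have h := integral_sub_right_eq_self (μ := volume) (fun y : ℝ => (y + a) * g1 y) a
  simp only [sub_add_cancel] at h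
  rw [h]
  have : (fun y : ℝ => (y + a) * g1 y) = fun y => y * g1 y + a * g1 y := by
    funext y; ring
  rw [this, integral_add integrable_x_g1 (integrable_g1.const_mul a),
    integral_x_g1, integral_const_mul, integral_g1]
  ring

lemma S2 (a : ℝ) : ∫ x : ℝ, x * x * g1 (x - a) = 1 + a * a := by
  have h := integral_sub_right_eq_self (μ := volume) (fun y : ℝ => (y + a) * (y + a) * g1 y) a
  simp only [sub_add_cancel] at h
  rw [h]
  have : (fun y : ℝ => (y + a) * (y + a) * g1 y)
      = fun y => (y ^ 2 * g1 y + (2 * a) * (y * g1 y)) + (a * a) * g1 y := by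
    funext y; ring
  have hadd : Integrable (fun y : ℝ => y ^ 2 * g1 y + 2 * a * (y * g1 y)) := by
    exact integrable_x2_g1.add (integrable_x_g1.const_mul (2 * a))
  rw [this, integral_add hadd (integrable_g1.const_mul (a * a)),
    integral_add integrable_x2_g1 (integrable_x_g1.const_mul (2 * a)),
    integral_x2_g1, integral_const_mul, integral_x_g1, integral_const_mul, integral_g1]
  ring

end LBaux
noncomputable def gaussM' (N : ℕ) (v : EuclideanSpace ℝ (Fin N)) : ℝ :=
  (2 * Real.pi) ^ (-(N : ℝ) / 2) * Real.exp (-‖v‖ ^ 2 / 2)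

namespace LBaux

lemma const_pow (N : ℕ) :
    ((Real.sqrt (2 * Real.pi))⁻¹ : ℝ) ^ N = (2 * Real.pi) ^ (-(N : ℝ) / 2) := by
  have h2π : (0:ℝ) ≤ 2 * Real.pi := by positivity
  rw [Real.sqrt_eq_rpow, ← Real.rpow_neg h2π, ← Real.rpow_natCast ((2 * Real.pi) ^ (-(1/2) : ℝ)) N,
    ← Real.rpow_mul h2π]
  congr 1
  push_cast; ring

lemma gaussM'_eq_prod (N : ℕ) (w : EuclideanSpace ℝ (Fin N)) :
    gaussM' N w = ∏ k, g1 (w k) := by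
  unfold gaussM' g1
  rw [Finset.prod_mul_distrib, Finset.prod_const, Finset.card_univ, Fintype.card_fin, const_pow]
  congr 1
  have hn : ‖w‖ ^ 2 = ∑ k, (w k) ^ 2 := by
    rw [EuclideanSpace.norm_eq, Real.sq_sqrt (Finset.sum_nonneg fun k _ => sq_nonneg _)]
    simp [sq_abs]
  have : -‖w‖ ^ 2 / 2 = ∑ k, (-(w k) ^ 2 / 2) := by
    rw [hn, ← Finset.sum_div, ← Finset.sum_neg_distrib]
  rw [this, Real.exp_sum]

lemma gaussM'_nonneg (N : ℕ) (v : EuclideanSpace ℝ (Fin N)) : 0 ≤ gaussM' N v := by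
  unfold gaussM'; positivity

lemma gaussM'_continuous (N : ℕ) : Continuous (gaussM' N) := by
  unfold gaussM'; fun_prop

lemma cont_apply (N : ℕ) (i : Fin N) :
    Continuous (fun v : EuclideanSpace ℝ (Fin N) => v i) :=
  (EuclideanSpace.proj (𝕜 := ℝ) i).continuous

section moment

variable {N : ℕ} (a : EuclideanSpace ℝ (Fin N)) (i j : Fin N)

/-- coordinatewise factor -/
noncomputable def hfac (a : EuclideanSpace ℝ (Fin N)) (i j k : Fin N) (t : ℝ) : ℝ :=
  (if k = i then t else 1) * (if k = j then t else 1) * g1 (t - a k)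

lemma hfac_integrable (k : Fin N) : Integrable (hfac a i j k) := by
  unfold hfac
  by_cases hki : k = i
  · by_cases hkj : k = j
    · simp only [if_pos hki, if_pos hkj]; exact J2 (a k)
    · simp only [if_pos hki, if_neg hkj, mul_one]; exact J1 (a k)
  · by_cases hkj : k = j
    · simp only [if_neg hki, if_pos hkj, one_mul]; exact J1 (a k)
    · simp only [if_neg hki, if_neg hkj, one_mul]; exact J0 (a k)

lemma hfac_key (v : EuclideanSpace ℝ (Fin N)) :
    v i * v j * gaussM' N (v - a) = ∏ k, hfac a i j k (v k) := by
  unfold hfac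
  rw [gaussM'_eq_prod, Finset.prod_mul_distrib, Finset.prod_mul_distrib,
    Finset.prod_ite_eq' Finset.univ i (fun k => v k),
    Finset.prod_ite_eq' Finset.univ j (fun k => v k)]
  simp [PiLp.sub_apply]

lemma hfac_comp :
    (fun v : EuclideanSpace ℝ (Fin N) => v i * v j * gaussM' N (v - a))
      = (fun x : Fin N → ℝ => ∏ k, hfac a i j k (x k))
          ∘ ((MeasurableEquiv.toLp 2 (Fin N → ℝ)).symm) := by
  funext v
  simp only [Function.comp_apply, MeasurableEquiv.toLp_symm_apply]
  exact hfac_key a i j v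

lemma moment_integrable :
    Integrable (fun v : EuclideanSpace ℝ (Fin N) => v i * v j * gaussM' N (v - a)) := by
  rw [hfac_comp a i j]
  exact ((EuclideanSpace.volume_preserving_symm_measurableEquiv_toLp (Fin N)).integrable_comp_emb
    (MeasurableEquiv.measurableEmbedding _)).2
    (Integrable.fintype_prod fun k => hfac_integrable a i j k)

lemma moment_integral :
    ∫ v : EuclideanSpace ℝ (Fin N), v i * v j * gaussM' N (v - a)
      = (if i = j then 1 else 0) + a i * a j := by
  rw [hfac_comp a i j]
  rw [show ∫ v : EuclideanSpace ℝ (Fin N), ((fun x : Fin N → ℝ => ∏ k, hfac a i j k (x k))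
        ∘ ((MeasurableEquiv.toLp 2 (Fin N → ℝ)).symm)) v
      = ∫ x : Fin N → ℝ, ∏ k, hfac a i j k (x k) from
    (by
      exact (EuclideanSpace.volume_preserving_symm_measurableEquiv_toLp (Fin N)).integral_comp'
        (fun x : Fin N → ℝ => ∏ k, hfac a i j k (x k)))]
  rw [volume_pi, integral_fintype_prod_eq_prod (ι := Fin N) (fun k => hfac a i j k)]
  by_cases hij : i = j
  · subst hij
    have hval : ∀ k, ∫ t : ℝ, hfac a i i k t = (if k = i then 1 + a i * a i else 1) := by
      intro k
      by_cases hki : k = i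
      · subst hki
        simp only [hfac, if_pos rfl, if_true]
        exact S2 (a k)
      · simp only [hfac, if_neg hki, one_mul, if_false]
        exact S0 (a k)
    rw [Finset.prod_congr rfl fun k _ => hval k, Finset.prod_ite_eq' Finset.univ i
      (fun _ => 1 + a i * a i)]
    simp
  · have hval : ∀ k, ∫ t : ℝ, hfac a i j k t
        = (if k = i then a i else 1) * (if k = j then a j else 1) := by
      intro k
      by_cases hki : k = i
      · subst hki
        have hkj : ¬ k = j := fun h => hij h
        simp only [hfac, if_pos rfl, if_neg hkj, mul_one]
        exact S1 (a k)
      · by_cases hkj : k = j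
        · subst hkj
          simp only [hfac, if_neg hki, if_pos rfl, one_mul]
          exact S1 (a k)
        · simp only [hfac, if_neg hki, if_neg hkj, one_mul, mul_one]
          exact S0 (a k)
    rw [Finset.prod_congr rfl fun k _ => hval k, Finset.prod_mul_distrib,
      Finset.prod_ite_eq' Finset.univ i (fun _ => a i),
      Finset.prod_ite_eq' Finset.univ j (fun _ => a j)]
    simp [hij]

lemma apply_sq_le : a i * a i ≤ ‖a‖ ^ 2 := by
  rw [EuclideanSpace.norm_eq, Real.sq_sqrt (Finset.sum_nonneg fun k _ => sq_nonneg _)]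
  have h := Finset.single_le_sum (f := fun k => ‖a k‖ ^ 2)
    (fun k _ => sq_nonneg _) (Finset.mem_univ i)
  calc a i * a i = ‖a i‖ ^ 2 := by rw [Real.norm_eq_abs, sq_abs]; ring
    _ ≤ _ := h

lemma abs_apply_le : |a i| ≤ ‖a‖ := by
  have h := apply_sq_le a i
  nlinarith [abs_nonneg (a i), norm_nonneg a, sq_abs (a i)]

lemma abs_moment_integrable :
    Integrable (fun v : EuclideanSpace ℝ (Fin N) => |v i * v j| * gaussM' N (v - a)) := by
  refine Integrable.mono' ((moment_integrable a i i).add (moment_integrable a j j))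
    (Continuous.aestronglyMeasurable (by
      exact (((cont_apply N i).mul (cont_apply N j)).abs.mul
        ((gaussM'_continuous N).comp (continuous_id.sub continuous_const)))))
    (Filter.Eventually.of_forall fun v => ?_)
  rw [Real.norm_eq_abs, abs_of_nonneg (mul_nonneg (abs_nonneg _) (gaussM'_nonneg N _))]
  have h1 : |v i * v j| ≤ v i * v i + v j * v j := by
    rw [abs_mul]
    nlinarith [abs_nonneg (v i), abs_nonneg (v j), sq_abs (v i), sq_abs (v j),
      sq_nonneg (|v i| - |v j|)]
  simp only [Pi.add_apply]
  nlinarith [gaussM'_nonneg N (v - a), mul_le_mul_of_nonneg_right h1 (gaussM'_nonneg N (v - a))]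

lemma abs_moment_le :
    ∫ v : EuclideanSpace ℝ (Fin N), |v i * v j| * gaussM' N (v - a)
      ≤ 2 * (1 + ‖a‖ ^ 2) := by
  have hmono := integral_mono (abs_moment_integrable a i j)
    ((moment_integrable a i i).add (moment_integrable a j j)) (fun v => by
      have h1 : |v i * v j| ≤ v i * v i + v j * v j := by
        rw [abs_mul]
        nlinarith [abs_nonneg (v i), abs_nonneg (v j), sq_abs (v i), sq_abs (v j),
          sq_nonneg (|v i| - |v j|)]
      have := mul_le_mul_of_nonneg_right h1 (gaussM'_nonneg N (v - a))
      simpa [add_mul] using this)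
  simp only [Pi.add_apply] at hmono
  rw [integral_add (moment_integrable a i i) (moment_integrable a j j),
    moment_integral a i i, moment_integral a j j] at hmono
  have h1 := apply_sq_le a i
  have h2 := apply_sq_le a j
  norm_num at hmono
  simp only [abs_mul]
  linarith

end moment
end LBaux
namespace LBaux

lemma int_exp_half : IntegrableOn (fun x : ℝ => Real.exp (x / 2)) (Set.Iic 0) := by
  refine integrableOn_Iic_of_intervalIntegral_norm_bounded (l := Filter.atBot) (a := id)
    (2 : ℝ) 0 (fun i => (by fun_prop : Continuous fun x : ℝ => Real.exp (x / 2)).integrableOn_Ioc)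
    Filter.tendsto_id (Filter.Eventually.of_forall fun i => ?_)
  have h1 : (fun x : ℝ => ‖Real.exp (x / 2)‖) = fun x : ℝ => Real.exp (x / 2) := by
    funext x; rw [Real.norm_eq_abs, Real.abs_exp]
  simp only [h1, id]
  rw [intervalIntegral.integral_comp_div (fun x => Real.exp x) (by norm_num : (2:ℝ) ≠ 0),
    integral_exp]
  have := Real.exp_pos (i / 2)
  simp only [smul_eq_mul, zero_div, Real.exp_zero]
  nlinarith

lemma int_sq_exp : IntegrableOn (fun σ : ℝ => σ ^ 2 * Real.exp σ) (Set.Iic 0) := by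
  refine Integrable.mono' (int_exp_half.const_mul 16)
    ((by fun_prop : Continuous fun σ : ℝ => σ ^ 2 * Real.exp σ).aestronglyMeasurable.restrict)
    (((ae_restrict_iff' measurableSet_Iic).2 (Filter.Eventually.of_forall fun σ hσ => ?_)))
  have hσ0 : σ ≤ 0 := hσ
  have e1 : Real.exp σ = Real.exp (σ/2) * Real.exp (σ/2) := by rw [← Real.exp_add]; ring_nf
  have e2 : Real.exp (-σ/2) = Real.exp (-σ/4) * Real.exp (-σ/4) := by rw [← Real.exp_add]; ring_nf
  have e3 : Real.exp (σ/2) * Real.exp (-σ/2) = 1 := by rw [← Real.exp_add, show σ/2 + -σ/2 = 0 by ring, Real.exp_zero]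
  have h4 := Real.add_one_le_exp (-σ/4)
  have h5 : σ^2/16 ≤ Real.exp (-σ/2) := by nlinarith [Real.exp_pos (-σ/4)]
  have h6 : σ^2 * Real.exp (σ/2) ≤ 16 := by
    have := mul_le_mul_of_nonneg_right h5 (le_of_lt (Real.exp_pos (σ/2)))
    nlinarith [Real.exp_pos (σ/2)]
  rw [Real.norm_eq_abs, abs_of_nonneg (by positivity)]
  calc σ^2 * Real.exp σ = (σ^2 * Real.exp (σ/2)) * Real.exp (σ/2) := by rw [e1]; ring
    _ ≤ 16 * Real.exp (σ/2) := by
        exact mul_le_mul_of_nonneg_right h6 (le_of_lt (Real.exp_pos _))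

lemma exp_poly_int (c : ℝ) :
    IntegrableOn (fun σ : ℝ => Real.exp σ * (1 + c * σ ^ 2)) (Set.Iic 0) := by
  have h := (integrableOn_exp_Iic 0).add (int_sq_exp.const_mul c)
  refine h.congr (Filter.Eventually.of_forall fun σ => ?_)
  simp only [Pi.add_apply]; ring

end LBaux

/-- Second moment of the linear-Boltzmann invariant solution:
`∫ v ⊗ v M̄(v) dv = Id + ∫_{-∞}^0 e^σ (∫_σ^0 Ē) ⊗ (∫_σ^0 Ē) dσ` (componentwise). -/
theorem LB_invariant_second_moment (N : ℕ) (hN : 1 ≤ N) (R : ℝ) (hR : 0 ≤ R)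
    (Ebar : ℝ → EuclideanSpace ℝ (Fin N)) (hEm : Measurable Ebar)
    (hEb : ∀ r, r ≤ 0 → ‖Ebar r‖ ≤ R)
    (Mbar : EuclideanSpace ℝ (Fin N) → ℝ)
    (hMbar : ∀ v, Mbar v
      = ∫ σ in Set.Iic (0:ℝ), Real.exp σ * gaussM N (v - ∫ r in σ..(0:ℝ), Ebar r)) :
    ∀ i j : Fin N, (∫ v : EuclideanSpace ℝ (Fin N), v i * v j * Mbar v)
      = (if i = j then 1 else 0)
        + ∫ σ in Set.Iic (0:ℝ), Real.exp σ
            * ((∫ r in σ..(0:ℝ), Ebar r) i * (∫ r in σ..(0:ℝ), Ebar r) j) := by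
  have hgM : gaussM = gaussM' := rfl
  intro i j
  open LBaux in
  -- truncated force field
  set E' : ℝ → EuclideanSpace ℝ (Fin N) := fun r => if r ≤ 0 then Ebar r else 0 with hE'
  have hE'm : Measurable E' := Measurable.ite measurableSet_Iic hEm measurable_const
  have hE'b : ∀ r, ‖E' r‖ ≤ R := by
    intro r
    by_cases h : r ≤ 0
    · simp only [hE', if_pos h]; exact hEb r h
    · simp only [hE', if_neg h, norm_zero]; exact hR
  have hE'int : ∀ a b : ℝ, IntervalIntegrable E' volume a b := by
    intro a b
    refine IntervalIntegrable.mono_fun' (g := fun _ => R) intervalIntegrable_const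
      hE'm.aestronglyMeasurable.restrict
      (Filter.Eventually.of_forall fun r => hE'b r)
  set A : ℝ → EuclideanSpace ℝ (Fin N) := fun σ => ∫ r in σ..(0:ℝ), E' r with hAdef
  have hAcont : Continuous A := by
    have h := intervalIntegral.continuous_primitive hE'int 0
    have h2 : A = fun σ => -∫ x in (0:ℝ)..σ, E' x := by
      funext σ; exact intervalIntegral.integral_symm 0 σ
    rw [h2]; exact h.neg
  have hAeq : ∀ σ ≤ (0:ℝ), (∫ r in σ..(0:ℝ), Ebar r) = A σ := by
    intro σ hσ
    refine intervalIntegral.integral_congr fun r hr => ?_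
    rw [Set.uIcc_of_le hσ] at hr
    simp only [hE', if_pos hr.2]
  have hAbd : ∀ σ ≤ (0:ℝ), ‖A σ‖ ≤ R * |σ| := by
    intro σ hσ
    have h := intervalIntegral.norm_integral_le_of_norm_le_const
      (C := R) (a := σ) (b := 0) (f := E') (fun x _ => hE'b x)
    simpa using h
  have hAsq : ∀ σ ≤ (0:ℝ), ‖A σ‖ ^ 2 ≤ R ^ 2 * σ ^ 2 := by
    intro σ hσ
    have h := hAbd σ hσ
    nlinarith [norm_nonneg (A σ), abs_nonneg σ, sq_abs σ]
  set f : ℝ → EuclideanSpace ℝ (Fin N) → ℝ :=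
    fun σ v => Real.exp σ * (v i * v j * gaussM' N (v - A σ)) with hfdef
  have hfcont : Continuous (Function.uncurry f) := by
    exact (Real.continuous_exp.comp continuous_fst).mul
      ((((cont_apply N i).comp continuous_snd).mul
        ((cont_apply N j).comp continuous_snd)).mul
        ((gaussM'_continuous N).comp (continuous_snd.sub (hAcont.comp continuous_fst))))
  have hprod : Integrable (Function.uncurry f)
      ((volume.restrict (Set.Iic (0:ℝ))).prod volume) := by
    rw [integrable_prod_iff hfcont.aestronglyMeasurable]
    refine ⟨Filter.Eventually.of_forall fun σ => (moment_integrable (A σ) i j).const_mul (Real.exp σ), ?_⟩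
    have hmeas : AEStronglyMeasurable
        (fun σ => ∫ v : EuclideanSpace ℝ (Fin N), ‖Function.uncurry f (σ, v)‖)
        (volume.restrict (Set.Iic (0:ℝ))) :=
      (hfcont.aestronglyMeasurable.norm).integral_prod_right'
    refine Integrable.mono' ((exp_poly_int (R ^ 2)).const_mul 2) hmeas ?_
    rw [ae_restrict_iff' measurableSet_Iic]
    refine Filter.Eventually.of_forall fun σ hσ => ?_
    have hσ0 : σ ≤ 0 := hσ
    have hnn : 0 ≤ ∫ v : EuclideanSpace ℝ (Fin N), ‖Function.uncurry f (σ, v)‖ :=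
      integral_nonneg fun v => norm_nonneg _
    rw [Real.norm_eq_abs, abs_of_nonneg hnn]
    have heq : (fun v : EuclideanSpace ℝ (Fin N) => ‖Function.uncurry f (σ, v)‖)
        = fun v => Real.exp σ * (|v i * v j| * gaussM' N (v - A σ)) := by
      funext v
      show ‖Real.exp σ * (v i * v j * gaussM' N (v - A σ))‖ = _
      rw [Real.norm_eq_abs, abs_mul, abs_mul, Real.abs_exp,
        abs_of_nonneg (gaussM'_nonneg N _)]
    rw [heq, integral_const_mul]
    have h1 := abs_moment_le (A σ) i j
    have h2 := hAsq σ hσ0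
    have h3 := Real.exp_pos σ
    nlinarith [mul_le_mul_of_nonneg_left h1 h3.le]
  have hswap := integral_integral_swap hprod
  have hLHS : (∫ v : EuclideanSpace ℝ (Fin N), v i * v j * Mbar v)
      = ∫ v : EuclideanSpace ℝ (Fin N), ∫ σ in Set.Iic (0:ℝ), f σ v := by
    refine integral_congr_ae (Filter.Eventually.of_forall fun v => ?_)
    show v i * v j * Mbar v = ∫ σ in Set.Iic (0:ℝ), f σ v
    rw [hMbar v, ← integral_const_mul]
    refine setIntegral_congr_fun measurableSet_Iic fun σ hσ => ?_
    rw [hgM, hAeq σ hσ]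
    show v i * v j * (Real.exp σ * gaussM' N (v - A σ)) = _
    ring
  rw [hLHS, ← hswap]
  have hinner : ∀ σ, (∫ v : EuclideanSpace ℝ (Fin N), f σ v)
      = (if i = j then 1 else 0) * Real.exp σ + Real.exp σ * (A σ i * A σ j) := by
    intro σ
    show (∫ v : EuclideanSpace ℝ (Fin N),
        Real.exp σ * (v i * v j * gaussM' N (v - A σ))) = _
    rw [integral_const_mul, moment_integral (A σ) i j]
    ring
  rw [show (∫ σ in Set.Iic (0:ℝ), ∫ v : EuclideanSpace ℝ (Fin N), f σ v)
      = ∫ σ in Set.Iic (0:ℝ),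
          ((if i = j then 1 else 0) * Real.exp σ + Real.exp σ * (A σ i * A σ j)) from
    integral_congr_ae (Filter.Eventually.of_forall fun σ => hinner σ)]
  have hI2 : IntegrableOn (fun σ : ℝ => Real.exp σ * (A σ i * A σ j)) (Set.Iic (0:ℝ)) := by
    refine Integrable.mono' (int_sq_exp.const_mul (R ^ 2))
      ((Real.continuous_exp.mul
        (((cont_apply N i).comp hAcont).mul
          ((cont_apply N j).comp hAcont))).aestronglyMeasurable.restrict) ?_
    rw [ae_restrict_iff' measurableSet_Iic]
    refine Filter.Eventually.of_forall fun σ hσ => ?_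
    have hσ0 : σ ≤ 0 := hσ
    have h1 := abs_apply_le (A σ) i
    have h2 := abs_apply_le (A σ) j
    have h3 := hAsq σ hσ0
    rw [Real.norm_eq_abs, abs_mul, abs_mul, Real.abs_exp]
    have h4 : |A σ i| * |A σ j| ≤ R ^ 2 * σ ^ 2 := by
      nlinarith [abs_nonneg (A σ i), abs_nonneg (A σ j), norm_nonneg (A σ)]
    have h5 := Real.exp_pos σ
    nlinarith [mul_le_mul_of_nonneg_left h4 h5.le]
  rw [integral_add (((integrableOn_exp_Iic 0)).const_mul _) hI2, integral_const_mul,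
    integral_exp_Iic_zero, mul_one]
  congr 1
  refine setIntegral_congr_fun measurableSet_Iic fun σ hσ => ?_
  rw [hAeq σ hσ]
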